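/- (Sample complexity for the population centroid in dsq_θ.) Let n ≥ 1, ε > 0, δ ∈ (0,1), let θ : Fin n → Fin n → ℝ satisfy θ i j > 0 for all i, j, and set ρ = max over all (i,j) of θ i j. Let μ be a probability measure on the space of matrices Fin n → Fin n → ℝ such that μ-almost every matrix A is binary, symmetric (A i j = A j i), and has unit diagonal (A i i = 1), and let A_pop i j = ∫ A i j dμ(A). Let T : ℕ satisfy (T : ℝ) ≥ (ρ * n^2 / ε) * Real.log (n/δ). Then under the T-fold product measure μ^{⊗T} (i.i.d. samples A₁, …, A_T), with probability at least 1 − δ the sample centroid Ā = (1/T) • ∑_t A t satisfies dsq_θ(Ā, A_pop) ≤ ε. -/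

import Mathlib

open Finset MeasureTheory

section Helpers

open Real ProbabilityTheory

-- Hoeffding's scalar lemma: 1 - p + p e^s ≤ exp (s p + s²/8)
lemma hoeff_scalar (p : ℝ) (hp0 : 0 ≤ p) (hp1 : p ≤ 1) (s : ℝ) :
    1 - p + p * exp s ≤ exp (s * p + s ^ 2 / 8) := by
  set h : ℝ → ℝ := fun s => 1 - p + p * exp s with hh
  have hpos : ∀ x, 0 < h x := by
    intro x
    have hx : h x = 1 - p + p * exp x := rfl
    rw [hx]
    nlinarith [exp_pos x, mul_nonneg hp0 (exp_pos x).le]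
  set q : ℝ → ℝ := fun x => p * exp x / h x with hq
  have hder : ∀ x, HasDerivAt h (p * exp x) x := by
    intro x
    exact ((hasDerivAt_exp x).const_mul p).const_add (1 - p)
  have hqder : ∀ x, HasDerivAt q (q x - q x ^ 2) x := by
    intro x
    have := ((hasDerivAt_exp x).const_mul p).div (hder x) (hpos x).ne'
    have hne : (1 - p + p * exp x) ≠ 0 := by
      have := hpos x; exact this.ne'
    refine this.congr_deriv ?_
    simp only [hq, hh]
    field_simp
  set g : ℝ → ℝ := fun x => p + x / 4 - q x with hg
  have hgder : ∀ x, HasDerivAt g (1 / 4 - (q x - q x ^ 2)) x := by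
    intro x
    exact ((hasDerivAt_id x).div_const 4).const_add p |>.sub (hqder x)
  have hgmono : Monotone g := by
    apply monotone_of_deriv_nonneg
    · exact fun x => (hgder x).differentiableAt
    · intro x
      rw [(hgder x).deriv]
      nlinarith [sq_nonneg (q x - 1 / 2), sq_nonneg (q x)]
  have hg0 : g 0 = 0 := by
    simp [hg, hq, hh]
  set ψ : ℝ → ℝ := fun x => x * p + x ^ 2 / 8 - Real.log (h x) with hψ
  have hψder : ∀ x, HasDerivAt ψ (g x) x := by
    intro x
    have hlog : HasDerivAt (fun x => Real.log (h x)) (p * exp x / h x) x :=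
      (hder x).log (hpos x).ne'
    have h1 : HasDerivAt (fun x : ℝ => x * p + x ^ 2 / 8) (p + 2 * x / 8) x := by
      exact (((hasDerivAt_id x).mul_const p).add (((hasDerivAt_pow 2 x)).div_const 8)).congr_deriv (by simp only [Nat.cast_ofNat, one_mul, pow_one]; ring)
    have := h1.sub hlog
    refine this.congr_deriv ?_
    simp only [hg, hq]
    ring
  have hψ0 : ψ 0 = 0 := by simp [hψ, hh]
  have key : ∀ x, 0 ≤ ψ x := by
    intro x
    rcases le_total 0 x with hx | hx
    · have hmono : MonotoneOn ψ (Set.Ici 0) := by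
        apply monotoneOn_of_deriv_nonneg (convex_Ici 0)
        · exact fun y _ => (hψder y).differentiableAt.continuousAt.continuousWithinAt
        · exact fun y _ => (hψder y).differentiableAt.differentiableWithinAt
        · intro y hy
          rw [(hψder y).deriv]
          have : (0:ℝ) ≤ y := le_of_lt (by simpa using hy)
          calc (0:ℝ) = g 0 := hg0.symm
            _ ≤ g y := hgmono this
      have := hmono (Set.mem_Ici.2 le_rfl) (Set.mem_Ici.2 hx) hx
      linarith [hψ0]
    · have hmono : AntitoneOn ψ (Set.Iic 0) := by
        apply antitoneOn_of_deriv_nonpos (convex_Iic 0)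
        · exact fun y _ => (hψder y).differentiableAt.continuousAt.continuousWithinAt
        · exact fun y _ => (hψder y).differentiableAt.differentiableWithinAt
        · intro y hy
          rw [(hψder y).deriv]
          have hy0 : y ≤ 0 := le_of_lt (by simpa using hy)
          calc g y ≤ g 0 := hgmono hy0
            _ = 0 := hg0
      have := hmono (Set.mem_Iic.2 hx) (Set.mem_Iic.2 le_rfl) hx
      linarith [hψ0]
  have := key s
  have hlog : Real.log (h s) ≤ s * p + s ^ 2 / 8 := by simp only [hψ] at this; linarith
  calc h s = exp (Real.log (h s)) := (exp_log (hpos s)).symm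
    _ ≤ exp (s * p + s ^ 2 / 8) := exp_le_exp.2 hlog

lemma exp_convex_bound {x s : ℝ} (hx0 : 0 ≤ x) (hx1 : x ≤ 1) :
    exp (s * x) ≤ 1 - x + x * exp s := by
  have := convexOn_exp.2 (Set.mem_univ (0:ℝ)) (Set.mem_univ s)
    (by linarith : (0:ℝ) ≤ 1 - x) hx0 (by ring : (1 - x) + x = 1)
  simp only [smul_eq_mul, mul_zero, zero_add, exp_zero, mul_one] at this
  calc exp (s * x) = exp (x * s) := by rw [mul_comm]
    _ ≤ (1 - x) + x * exp s := this
    _ = 1 - x + x * exp s := by ring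

/-- Two-sided Hoeffding tail bound for i.i.d.-type sums of `[0,1]`-valued variables. -/
lemma hoeff_tail {Ω : Type*} [MeasurableSpace Ω] (P : Measure Ω) [IsProbabilityMeasure P]
    (T : ℕ) (X : Fin T → Ω → ℝ) (hmeas : ∀ t, Measurable (X t))
    (hindep : iIndepFun X P)
    (p : ℝ) (hp0 : 0 ≤ p) (hp1 : p ≤ 1)
    (hb : ∀ t, ∀ᵐ ω ∂P, X t ω ∈ Set.Icc (0:ℝ) 1)
    (hmean : ∀ t, ∫ ω, X t ω ∂P = p) (c : ℝ) (hc : 0 ≤ c) :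
    P {ω | (T:ℝ) * (p + c) ≤ (∑ t, X t) ω} + P {ω | (∑ t, X t) ω ≤ (T:ℝ) * (p - c)}
      ≤ ENNReal.ofReal (2 * exp (-2 * T * c ^ 2)) := by
  have hint : ∀ (s : ℝ) (t : Fin T), Integrable (fun ω => exp (s * X t ω)) P := by
    intro s t
    refine Integrable.mono' (integrable_const (exp |s|))
      ((hmeas t).const_mul s).exp.aestronglyMeasurable ?_
    filter_upwards [hb t] with ω hω
    rw [Real.norm_eq_abs, abs_exp]
    apply exp_le_exp.2
    calc s * X t ω ≤ |s * X t ω| := le_abs_self _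
      _ = |s| * |X t ω| := abs_mul _ _
      _ ≤ |s| * 1 := by
          apply mul_le_mul_of_nonneg_left _ (abs_nonneg s)
          rw [abs_le]; exact ⟨by linarith [hω.1], hω.2⟩
      _ = |s| := mul_one _
  have hintX : ∀ t, Integrable (X t) P := by
    intro t
    refine Integrable.mono' (integrable_const 1) (hmeas t).aestronglyMeasurable ?_
    filter_upwards [hb t] with ω hω
    rw [Real.norm_eq_abs, abs_le]; exact ⟨by linarith [hω.1], hω.2⟩
  have hmgf : ∀ (s : ℝ) (t : Fin T), mgf (X t) P s ≤ exp (s * p + s ^ 2 / 8) := by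
    intro s t
    have h1 : mgf (X t) P s ≤ ∫ ω, (1 - X t ω + X t ω * exp s) ∂P := by
      have i1 : Integrable (fun ω => 1 - X t ω) P := (integrable_const 1).sub (hintX t)
      have i2 : Integrable (fun ω => X t ω * exp s) P := (hintX t).mul_const (exp s)
      refine integral_mono_ae (hint s t) (i1.add i2) ?_
      filter_upwards [hb t] with ω hω
      exact exp_convex_bound hω.1 hω.2
    have i1 : Integrable (fun ω => 1 - X t ω) P := (integrable_const 1).sub (hintX t)
    have i2 : Integrable (fun ω => X t ω * exp s) P := (hintX t).mul_const (exp s)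
    have h2 : ∫ ω, (1 - X t ω + X t ω * exp s) ∂P = 1 - p + p * exp s := by
      rw [integral_add i1 i2, integral_sub (integrable_const 1) (hintX t),
        integral_mul_const, integral_const, hmean t]
      simp
    rw [h2] at h1
    exact h1.trans (hoeff_scalar p hp0 hp1 s)
  have hsum_int : ∀ s : ℝ, Integrable (fun ω => exp (s * (∑ t, X t) ω)) P :=
    fun s => hindep.integrable_exp_mul_sum hmeas (fun t _ => hint s t)
  have hmgfsum : ∀ s : ℝ, mgf (∑ t, X t) P s ≤ exp ((T:ℝ) * (s * p + s ^ 2 / 8)) := by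
    intro s
    rw [hindep.mgf_sum hmeas]
    calc ∏ t : Fin T, mgf (X t) P s ≤ ∏ t : Fin T, exp (s * p + s ^ 2 / 8) :=
          Finset.prod_le_prod (fun t _ => mgf_nonneg) (fun t _ => hmgf s t)
      _ = exp ((T:ℝ) * (s * p + s ^ 2 / 8)) := by
          rw [Finset.prod_const, ← Real.exp_nat_mul]
          simp
  have hup : (P {ω | (T:ℝ) * (p + c) ≤ (∑ t, X t) ω}).toReal ≤ exp (-2 * T * c ^ 2) := by
    have := measure_ge_le_exp_mul_mgf (μ := P) (X := ∑ t, X t) ((T:ℝ) * (p + c))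
      (by linarith : (0:ℝ) ≤ 4 * c) (hsum_int (4 * c))
    refine this.trans ?_
    calc exp (-(4 * c) * ((T:ℝ) * (p + c))) * mgf (∑ t, X t) P (4 * c)
        ≤ exp (-(4 * c) * ((T:ℝ) * (p + c))) * exp ((T:ℝ) * ((4 * c) * p + (4 * c) ^ 2 / 8)) := by
          exact mul_le_mul_of_nonneg_left (hmgfsum (4 * c)) (exp_pos _).le
      _ = exp (-2 * T * c ^ 2) := by rw [← Real.exp_add]; ring_nf
  have hlo : (P {ω | (∑ t, X t) ω ≤ (T:ℝ) * (p - c)}).toReal ≤ exp (-2 * T * c ^ 2) := by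
    have := measure_le_le_exp_mul_mgf (μ := P) (X := ∑ t, X t) ((T:ℝ) * (p - c))
      (by linarith : (-(4 * c) : ℝ) ≤ 0) (hsum_int (-(4 * c)))
    refine this.trans ?_
    calc exp (-(-(4 * c)) * ((T:ℝ) * (p - c))) * mgf (∑ t, X t) P (-(4 * c))
        ≤ exp (-(-(4 * c)) * ((T:ℝ) * (p - c))) *
            exp ((T:ℝ) * ((-(4 * c)) * p + (-(4 * c)) ^ 2 / 8)) := by
          exact mul_le_mul_of_nonneg_left (hmgfsum (-(4 * c))) (exp_pos _).le
      _ = exp (-2 * T * c ^ 2) := by rw [← Real.exp_add]; ring_nf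
  have e1 : P {ω | (T:ℝ) * (p + c) ≤ (∑ t, X t) ω} ≤ ENNReal.ofReal (exp (-2 * T * c ^ 2)) := by
    rw [← ENNReal.ofReal_toReal (measure_ne_top P _)]
    exact ENNReal.ofReal_le_ofReal hup
  have e2 : P {ω | (∑ t, X t) ω ≤ (T:ℝ) * (p - c)} ≤ ENNReal.ofReal (exp (-2 * T * c ^ 2)) := by
    rw [← ENNReal.ofReal_toReal (measure_ne_top P _)]
    exact ENNReal.ofReal_le_ofReal hlo
  calc P {ω | (T:ℝ) * (p + c) ≤ (∑ t, X t) ω} + P {ω | (∑ t, X t) ω ≤ (T:ℝ) * (p - c)}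
      ≤ ENNReal.ofReal (exp (-2 * T * c ^ 2)) + ENNReal.ofReal (exp (-2 * T * c ^ 2)) :=
        add_le_add e1 e2
    _ = ENNReal.ofReal (2 * exp (-2 * T * c ^ 2)) := by
        rw [← ENNReal.ofReal_add (exp_pos _).le (exp_pos _).le]; ring_nf

variable {E : Type*} [MeasurableSpace E] (μ : Measure E) [IsProbabilityMeasure μ] (T : ℕ)

lemma pi_eval_apply (t : Fin T) (s : Set E) :
    Measure.pi (fun _ : Fin T => μ) (Function.eval t ⁻¹' s) = μ s := by
  rw [← Set.univ_pi_update_univ, Measure.pi_pi]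
  have : ∀ i : Fin T, μ (Function.update (fun _ : Fin T => Set.univ) t s i)
      = Function.update (fun _ : Fin T => (1 : ENNReal)) t (μ s) i := by
    intro i
    by_cases hi : i = t
    · subst hi; simp
    · simp [Function.update_of_ne hi]
  simp only [this]
  rw [Finset.prod_update_of_mem (Finset.mem_univ t)]
  simp

lemma pi_map_eval (t : Fin T) :
    Measure.map (fun ω : Fin T → E => ω t) (Measure.pi (fun _ : Fin T => μ)) = μ := by
  ext s hs
  rw [Measure.map_apply (measurable_pi_apply t) hs]
  exact pi_eval_apply μ T t s

lemma iIndepFun_eval :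
    iIndepFun
      (fun (t : Fin T) (ω : Fin T → E) => ω t) (Measure.pi (fun _ : Fin T => μ)) := by
  classical
  rw [iIndepFun_iff_measure_inter_preimage_eq_mul]
  intro S sets hsets
  have hset : (⋂ t ∈ S, (fun ω : Fin T → E => ω t) ⁻¹' sets t) =
      Set.pi Set.univ (fun t => if t ∈ S then sets t else Set.univ) := by
    ext ω
    simp only [Set.mem_iInter, Set.mem_preimage, Set.mem_pi, Set.mem_univ, true_implies]
    constructor
    · intro h t
      by_cases ht : t ∈ S <;> simp [ht, h t]
    · intro h t ht
      have := h t
      simpa [ht] using this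
  rw [hset, Measure.pi_pi]
  have : ∀ t : Fin T, Measure.pi (fun _ : Fin T => μ) ((fun ω : Fin T → E => ω t) ⁻¹' sets t)
      = μ (sets t) := fun t => pi_eval_apply μ T t (sets t)
  simp only [this]
  have h2 : ∀ i : Fin T, μ (if i ∈ S then sets i else Set.univ)
      = if i ∈ S then μ (sets i) else 1 := by
    intro i; by_cases hi : i ∈ S <;> simp [hi]
  simp only [h2]
  rw [Finset.prod_ite_mem Finset.univ S (fun i => μ (sets i)), Finset.univ_inter]

end Helpers

/-- The squared version dsq_θ of the weighted distance. -/
noncomputable def dsqTheta {n : ℕ} (θ A₁ A₂ : Fin n → Fin n → ℝ) : ℝ :=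
  (1 / 2) * ∑ i : Fin n, ∑ j : Fin n, θ i j * (A₁ i j - A₂ i j) ^ 2

set_option maxHeartbeats 1000000 in
/-- Sample complexity for the population centroid in dsq_θ: with
`T ≥ (ρ n² / ε) log(n/δ)` i.i.d. samples, where ρ is the maximum weight, with probability
at least 1 - δ the sample centroid is within ε of the population centroid in dsq_θ. -/
theorem centroid_sample_complexity_dsq (n : ℕ) (hn : 1 ≤ n)
    (ε δ : ℝ) (hε : 0 < ε) (hδ : δ ∈ Set.Ioo (0 : ℝ) 1)
    (θ : Fin n → Fin n → ℝ) (hθ : ∀ i j, 0 < θ i j) (ρ : ℝ)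
    (hρ : ρ = ⨆ q : Fin n × Fin n, θ q.1 q.2)
    (μ : Measure (Fin n → Fin n → ℝ)) [IsProbabilityMeasure μ]
    (hμ : ∀ᵐ A ∂μ, (∀ i j, A i j ∈ ({0, 1} : Set ℝ)) ∧
      (∀ i j, A i j = A j i) ∧ (∀ i, A i i = 1))
    (T : ℕ) (hT : (ρ * (n : ℝ) ^ 2 / ε) * Real.log ((n : ℝ) / δ) ≤ (T : ℝ)) :
    ENNReal.ofReal (1 - δ) ≤
      Measure.pi (fun _ : Fin T => μ)
        {A : Fin T → Fin n → Fin n → ℝ |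
          dsqTheta θ ((1 / (T : ℝ)) • ∑ t : Fin T, A t)
            (fun i j => ∫ B, B i j ∂μ) ≤ ε} := by
  classical
  obtain ⟨hδ0, hδ1⟩ := hδ
  set P : Measure (Fin T → Fin n → Fin n → ℝ) := Measure.pi (fun _ : Fin T => μ) with hP
  haveI : IsProbabilityMeasure P := by rw [hP]; infer_instance
  set p : Fin n → Fin n → ℝ := fun i j => ∫ B, B i j ∂μ with hp
  have hbdd : BddAbove (Set.range fun q : Fin n × Fin n => θ q.1 q.2) :=
    (Set.finite_range _).bddAbove
  have hθρ : ∀ i j, θ i j ≤ ρ := fun i j => hρ ▸ le_ciSup hbdd (i, j)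
  have i0 : Fin n := ⟨0, hn⟩
  have hρpos : 0 < ρ := lt_of_lt_of_le (hθ i0 i0) (hθρ i0 i0)
  have hn1 : (1:ℝ) ≤ (n:ℝ) := by exact_mod_cast hn
  have hn0 : (0:ℝ) < (n:ℝ) := by linarith
  have hL : 0 < Real.log ((n:ℝ)/δ) := Real.log_pos (by rw [lt_div_iff₀ hδ0]; nlinarith)
  have hTpos : 0 < (T:ℝ) := lt_of_lt_of_le (by positivity) hT
  set c : ℝ := Real.sqrt (2*ε/(ρ*(n:ℝ)^2)) with hcdef
  have hc0 : 0 ≤ c := Real.sqrt_nonneg _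
  have hc2 : c^2 = 2*ε/(ρ*(n:ℝ)^2) := Real.sq_sqrt (by positivity)
  have hmeasE : ∀ i j : Fin n, Measurable (fun B : Fin n → Fin n → ℝ => B i j) :=
    fun i j => (measurable_pi_apply j).comp (measurable_pi_apply i)
  have hmeasX : ∀ (t : Fin T) (i j : Fin n),
      Measurable (fun ω : Fin T → Fin n → Fin n → ℝ => ω t i j) :=
    fun t i j => (hmeasE i j).comp (measurable_pi_apply t)
  -- a.e. transfer to the product space
  have hae : ∀ᵐ ω ∂P, ∀ t : Fin T, (∀ i j, ω t i j ∈ ({0,1}:Set ℝ)) ∧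
      (∀ i j, ω t i j = ω t j i) ∧ (∀ i, ω t i i = 1) := by
    rw [ae_all_iff]
    intro t
    have hmap : Measure.map (fun ω : Fin T → Fin n → Fin n → ℝ => ω t) P = μ := by
      rw [hP]; exact pi_map_eval μ T t
    exact ae_of_ae_map (μ := P) (f := fun ω : Fin T → Fin n → Fin n → ℝ => ω t)
      (p := fun B : Fin n → Fin n → ℝ => (∀ i j, B i j ∈ ({0,1}:Set ℝ)) ∧
        (∀ i j, B i j = B j i) ∧ (∀ i, B i i = 1))
      (measurable_pi_apply t).aemeasurable (by rw [hmap]; exact hμ)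
  have hmean : ∀ (t : Fin T) (i j : Fin n), ∫ ω, ω t i j ∂P = p i j := by
    intro t i j
    have hmap : Measure.map (fun ω : Fin T → Fin n → Fin n → ℝ => ω t) P = μ := by
      rw [hP]; exact pi_map_eval μ T t
    have := integral_map (μ := P) (φ := fun ω : Fin T → Fin n → Fin n → ℝ => ω t)
      (f := fun B : Fin n → Fin n → ℝ => B i j)
      (measurable_pi_apply t).aemeasurable ((hmeasE i j).aestronglyMeasurable)
    rw [hmap] at this
    exact this.symm
  have hae01 : ∀ᵐ B ∂μ, ∀ i j : Fin n, 0 ≤ B i j ∧ B i j ≤ 1 := by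
    filter_upwards [hμ] with B hB
    intro i j
    have := hB.1 i j
    simp only [Set.mem_insert_iff, Set.mem_singleton_iff] at this
    rcases this with h | h <;> rw [h] <;> norm_num
  have hintμ : ∀ i j : Fin n, Integrable (fun B => B i j) μ := by
    intro i j
    refine Integrable.mono' (integrable_const 1) (hmeasE i j).aestronglyMeasurable ?_
    filter_upwards [hae01] with B hB
    rw [Real.norm_eq_abs, abs_le]
    exact ⟨by linarith [(hB i j).1], (hB i j).2⟩
  have hp0 : ∀ i j, 0 ≤ p i j := by
    intro i j
    refine integral_nonneg_of_ae ?_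
    filter_upwards [hae01] with B hB using (hB i j).1
  have hp1 : ∀ i j, p i j ≤ 1 := by
    intro i j
    have : p i j ≤ ∫ _, (1:ℝ) ∂μ := by
      refine integral_mono_ae (hintμ i j) (integrable_const 1) ?_
      filter_upwards [hae01] with B hB using (hB i j).2
    simpa using this
  have hpd : ∀ i, p i i = 1 := by
    intro i
    have : ∫ B, B i i ∂μ = ∫ _, (1:ℝ) ∂μ := by
      refine integral_congr_ae ?_
      filter_upwards [hμ] with B hB using hB.2.2 i
    rw [hp]
    simpa using this
  -- independence of the entries across samples
  have hind : ∀ i j : Fin n, ProbabilityTheory.iIndepFun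
      (fun t (ω : Fin T → Fin n → Fin n → ℝ) => ω t i j) P := by
    intro i j
    exact (iIndepFun_eval μ T).comp (fun _ => fun B : Fin n → Fin n → ℝ => B i j)
      (fun _ => hmeasE i j)
  set X : Fin n → Fin n → Fin T → (Fin T → Fin n → Fin n → ℝ) → ℝ :=
    fun i j t ω => ω t i j with hX
  set Bad : Fin n → Fin n → Set (Fin T → Fin n → Fin n → ℝ) :=
    fun i j => {ω | (T:ℝ) * (p i j + c) ≤ (∑ t, X i j t) ω} ∪
      {ω | (∑ t, X i j t) ω ≤ (T:ℝ) * (p i j - c)} with hBadDef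
  have hBadM : ∀ i j : Fin n, P (Bad i j) ≤ ENNReal.ofReal (2 * Real.exp (-2 * T * c ^ 2)) := by
    intro i j
    refine le_trans (measure_union_le _ _) ?_
    refine hoeff_tail P T (X i j) (fun t => hmeasX t i j) (hind i j) (p i j)
      (hp0 i j) (hp1 i j) ?_ (fun t => hmean t i j) c hc0
    intro t
    filter_upwards [hae] with ω hω
    have := (hω t).1 i j
    simp only [Set.mem_insert_iff, Set.mem_singleton_iff] at this
    rcases this with h | h <;> rw [Set.mem_Icc, hX] <;> simp [h]
  set N : Set (Fin T → Fin n → Fin n → ℝ) :=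
    {ω | ¬ ∀ t : Fin T, (∀ i j, ω t i j ∈ ({0,1}:Set ℝ)) ∧
      (∀ i j, ω t i j = ω t j i) ∧ (∀ i, ω t i i = 1)} with hN
  have hnull : P N = 0 := ae_iff.mp hae
  -- pointwise: good samples give small distance
  have key : ∀ ω : Fin T → Fin n → Fin n → ℝ,
      (∀ t : Fin T, (∀ i j, ω t i j ∈ ({0,1}:Set ℝ)) ∧
        (∀ i j, ω t i j = ω t j i) ∧ (∀ i, ω t i i = 1)) →
      (∀ q ∈ (Finset.univ : Finset (Fin n)).offDiag, ω ∉ Bad q.1 q.2) →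
      dsqTheta θ ((1 / (T : ℝ)) • ∑ t : Fin T, ω t) p ≤ ε := by
    intro ω hQ hG
    have hAbar : ∀ i j, ((1 / (T : ℝ)) • ∑ t : Fin T, ω t) i j
        = (1/(T:ℝ)) * ∑ t, ω t i j := by
      intro i j; simp [Finset.sum_apply]
    have hterm : ∀ i j, θ i j * (((1 / (T : ℝ)) • ∑ t : Fin T, ω t) i j - p i j)^2 ≤
        (if i = j then 0 else ρ * c^2) := by
      intro i j
      by_cases hij : i = j
      · subst hij
        have hdiag : ((1/(T:ℝ)) • ∑ t : Fin T, ω t) i i = 1 := by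
          rw [hAbar]
          have h1 : ∀ t : Fin T, ω t i i = 1 := fun t => (hQ t).2.2 i
          simp only [h1, Finset.sum_const, Finset.card_univ, Fintype.card_fin,
            nsmul_eq_mul, mul_one]
          field_simp
        rw [if_pos rfl, hdiag, hpd i]
        simp
      · rw [if_neg hij]
        have hq : (i, j) ∈ (Finset.univ : Finset (Fin n)).offDiag :=
          Finset.mem_offDiag.2 ⟨Finset.mem_univ _, Finset.mem_univ _, hij⟩
        have hnb := hG (i, j) hq
        rw [hBadDef] at hnb
        simp only [Set.mem_union, Set.mem_setOf_eq, not_or, not_le] at hnb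
        obtain ⟨hu, hl⟩ := hnb
        have hS : (∑ t, X i j t) ω = ∑ t, ω t i j := by simp [hX, Finset.sum_apply]
        rw [hS] at hu hl
        have hd2 : (((1/(T:ℝ)) • ∑ t : Fin T, ω t) i j - p i j)^2 ≤ c^2 := by
          rw [hAbar]
          have e1 : (1/(T:ℝ)) * (∑ t, ω t i j) - p i j ≤ c := by
            rw [one_div, inv_mul_eq_div, sub_le_iff_le_add]
            rw [div_le_iff₀ hTpos]
            linarith
          have e2 : -c ≤ (1/(T:ℝ)) * (∑ t, ω t i j) - p i j := by
            rw [one_div, inv_mul_eq_div, le_sub_iff_add_le]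
            rw [le_div_iff₀ hTpos]
            linarith
          exact sq_le_sq' e2 e1
        exact mul_le_mul (hθρ i j) hd2 (sq_nonneg _) hρpos.le
    have hin : ∀ i : Fin n, ∑ j : Fin n, (if i = j then (0:ℝ) else ρ*c^2)
        = (n:ℝ)*(ρ*c^2) - ρ*c^2 := by
      intro i
      have h3 : ∀ j : Fin n, (if i = j then (0:ℝ) else ρ*c^2)
          = ρ*c^2 - (if i = j then ρ*c^2 else 0) := by
        intro j; split <;> ring
      simp only [h3]
      rw [Finset.sum_sub_distrib, Finset.sum_const, Finset.sum_ite_eq]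
      simp [Finset.card_univ, nsmul_eq_mul]
    calc dsqTheta θ ((1 / (T : ℝ)) • ∑ t : Fin T, ω t) p
        = (1/2) * ∑ i : Fin n, ∑ j : Fin n,
            θ i j * (((1 / (T : ℝ)) • ∑ t : Fin T, ω t) i j - p i j)^2 := rfl
      _ ≤ (1/2) * ∑ i : Fin n, ∑ j : Fin n, (if i = j then (0:ℝ) else ρ * c^2) := by
          apply mul_le_mul_of_nonneg_left _ (by norm_num)
          exact Finset.sum_le_sum fun i _ => Finset.sum_le_sum fun j _ => hterm i j
      _ = (1/2) * ((n:ℝ) * ((n:ℝ)*(ρ*c^2) - ρ*c^2)) := by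
          simp only [hin, Finset.sum_const, Finset.card_univ, Fintype.card_fin, nsmul_eq_mul]
      _ ≤ ε := by
          have hKsq : (ρ*c^2) * (n:ℝ)^2 = 2*ε := by
            rw [hc2]; field_simp
          have hKnn : 0 ≤ (n:ℝ)*(ρ*c^2) := by positivity
          nlinarith [hKsq, hKnn]
  -- inclusion of the complement in the bad events
  have hincl : {A : Fin T → Fin n → Fin n → ℝ |
      dsqTheta θ ((1 / (T : ℝ)) • ∑ t : Fin T, A t) p ≤ ε}ᶜ ⊆
      N ∪ ⋃ q ∈ (Finset.univ : Finset (Fin n)).offDiag, Bad q.1 q.2 := by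
    intro ω hω
    by_contra hcon
    simp only [Set.mem_union, not_or] at hcon
    obtain ⟨h1, h2⟩ := hcon
    rw [hN, Set.mem_setOf_eq, not_not] at h1
    refine hω (key ω h1 ?_)
    intro q hq hb
    exact h2 (Set.mem_iUnion₂.2 ⟨q, hq, hb⟩)
  -- the union bound
  have hcard : ((Finset.univ : Finset (Fin n)).offDiag.card : ℝ) = (n:ℝ)*(n:ℝ) - (n:ℝ) := by
    rw [Finset.offDiag_card]
    have hle : n ≤ n * n := Nat.le_mul_of_pos_left n (by omega)
    rw [Finset.card_univ, Fintype.card_fin]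
    push_cast [Nat.cast_sub hle]
    ring
  have hnumeric : ((n:ℝ)*(n:ℝ) - (n:ℝ)) * (2 * Real.exp (-2 * T * c ^ 2)) ≤ δ := by
    have hexp : Real.exp (-2 * T * c^2) ≤ (δ/(n:ℝ))^4 := by
      have h2T : 4 * Real.log ((n:ℝ)/δ) ≤ 2*(T:ℝ)*c^2 := by
        have he : 2*(T:ℝ)*c^2 = (T:ℝ) * (4*ε/(ρ*(n:ℝ)^2)) := by rw [hc2]; ring
        rw [he]
        have h4 : (0:ℝ) < 4*ε/(ρ*(n:ℝ)^2) := by positivity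
        calc 4 * Real.log ((n:ℝ)/δ)
            = ((ρ*(n:ℝ)^2/ε) * Real.log ((n:ℝ)/δ)) * (4*ε/(ρ*(n:ℝ)^2)) := by
              field_simp
          _ ≤ (T:ℝ) * (4*ε/(ρ*(n:ℝ)^2)) := mul_le_mul_of_nonneg_right hT h4.le
      calc Real.exp (-2 * T * c^2) ≤ Real.exp (-(4*Real.log ((n:ℝ)/δ))) :=
            Real.exp_le_exp.2 (by linarith)
        _ = (δ/(n:ℝ))^4 := by
            rw [show -(4*Real.log ((n:ℝ)/δ)) = (4:ℕ) * (-Real.log ((n:ℝ)/δ)) by push_cast; ring,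
              Real.exp_nat_mul, Real.exp_neg, Real.exp_log (by positivity), inv_div]
    have hd4 : (δ/(n:ℝ))^4 = δ^4/(n:ℝ)^4 := div_pow δ (n:ℝ) 4
    rcases Nat.lt_or_ge n 2 with h2 | h2
    · have : n = 1 := by omega
      subst this
      norm_num
      exact hδ0.le
    · have hn2 : (2:ℝ) ≤ (n:ℝ) := by exact_mod_cast h2
      calc ((n:ℝ)*(n:ℝ) - (n:ℝ)) * (2 * Real.exp (-2 * T * c ^ 2))
          ≤ ((n:ℝ)*(n:ℝ) - (n:ℝ)) * (2 * (δ^4/(n:ℝ)^4)) := by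
            apply mul_le_mul_of_nonneg_left _ (by nlinarith)
            rw [← hd4]
            linarith [hexp]
        _ ≤ δ := by
            have hδ4 : δ^4 ≤ δ := by
              calc δ^4 ≤ δ^1 := pow_le_pow_of_le_one hδ0.le hδ1.le (by norm_num)
                _ = δ := pow_one δ
            have h1 : ((n:ℝ)*(n:ℝ) - (n:ℝ)) * (2 * (δ^4/(n:ℝ)^4))
                = ((n:ℝ)*(n:ℝ) - (n:ℝ)) * 2 * δ^4 / (n:ℝ)^4 := by ring
            rw [h1, div_le_iff₀ (by positivity : (0:ℝ) < (n:ℝ)^4)]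
            have e1 : 2*(n:ℝ)^2*δ^4 ≤ 2*(n:ℝ)^2*δ := by nlinarith [sq_nonneg (n:ℝ)]
            have e2 : 2*(n:ℝ)^2*δ ≤ (n:ℝ)^4*δ := by nlinarith [sq_nonneg ((n:ℝ)^2 - 2)]
            have e3 : 0 ≤ 2*(n:ℝ)*δ^4 := by positivity
            nlinarith [e1, e2, e3]
  have hBig : P (N ∪ ⋃ q ∈ (Finset.univ : Finset (Fin n)).offDiag, Bad q.1 q.2)
      ≤ ENNReal.ofReal δ := by
    refine le_trans (measure_union_le _ _) ?_
    rw [hnull, zero_add]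
    refine le_trans (measure_biUnion_finset_le _ _) ?_
    calc ∑ q ∈ (Finset.univ : Finset (Fin n)).offDiag, P (Bad q.1 q.2)
        ≤ ∑ _q ∈ (Finset.univ : Finset (Fin n)).offDiag,
            ENNReal.ofReal (2 * Real.exp (-2 * T * c ^ 2)) :=
          Finset.sum_le_sum fun q _ => hBadM q.1 q.2
      _ = ((Finset.univ : Finset (Fin n)).offDiag.card : ENNReal) *
            ENNReal.ofReal (2 * Real.exp (-2 * T * c ^ 2)) := by
          rw [Finset.sum_const, nsmul_eq_mul]
      _ = ENNReal.ofReal (((Finset.univ : Finset (Fin n)).offDiag.card : ℝ) *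
            (2 * Real.exp (-2 * T * c ^ 2))) := by
          rw [← ENNReal.ofReal_natCast, ← ENNReal.ofReal_mul (by positivity)]
      _ ≤ ENNReal.ofReal δ := by
          apply ENNReal.ofReal_le_ofReal
          rw [hcard]
          exact hnumeric
  have hcompl : P ({A : Fin T → Fin n → Fin n → ℝ |
      dsqTheta θ ((1 / (T : ℝ)) • ∑ t : Fin T, A t) p ≤ ε}ᶜ) ≤ ENNReal.ofReal δ :=
    le_trans (measure_mono hincl) hBig
  have huniv : (1:ENNReal) ≤ P {A : Fin T → Fin n → Fin n → ℝ |
      dsqTheta θ ((1 / (T : ℝ)) • ∑ t : Fin T, A t) p ≤ ε} + ENNReal.ofReal δ := by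
    calc (1:ENNReal) = P Set.univ := (measure_univ).symm
      _ = P ({A : Fin T → Fin n → Fin n → ℝ |
            dsqTheta θ ((1 / (T : ℝ)) • ∑ t : Fin T, A t) p ≤ ε} ∪
            {A : Fin T → Fin n → Fin n → ℝ |
            dsqTheta θ ((1 / (T : ℝ)) • ∑ t : Fin T, A t) p ≤ ε}ᶜ) := by
          rw [Set.union_compl_self]
      _ ≤ P {A : Fin T → Fin n → Fin n → ℝ |
            dsqTheta θ ((1 / (T : ℝ)) • ∑ t : Fin T, A t) p ≤ ε} +
          P ({A : Fin T → Fin n → Fin n → ℝ |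
            dsqTheta θ ((1 / (T : ℝ)) • ∑ t : Fin T, A t) p ≤ ε}ᶜ) :=
          measure_union_le _ _
      _ ≤ _ := add_le_add_right hcompl _
  have hfin : ENNReal.ofReal (1 - δ) = 1 - ENNReal.ofReal δ := by
    rw [ENNReal.ofReal_sub 1 hδ0.le, ENNReal.ofReal_one]
  rw [hfin]
  exact tsub_le_iff_right.2 huniv
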